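/- Let R ⊆ (Fin r → Bool) be a zero-valid mergeable Boolean relation. Then for all tuples α, β, γ ∈ R, the tuple α ∧ (β ∨ γ) belongs to R (i.e., R is IHSB-). -/
import Mathlib


/-- The merge operation applies to tuples `α β γ δ` if `α ∧ δ ≤ β ≤ α` and
`β ∧ γ ≤ δ ≤ γ` (pointwise, on Boolean tuples). -/
def MergeApplies {r : ℕ} (α β γ δ : Fin r → Bool) : Prop :=
  (∀ i, (α i && δ i) ≤ β i) ∧ (∀ i, β i ≤ α i) ∧
    (∀ i, (β i && γ i) ≤ δ i) ∧ (∀ i, δ i ≤ γ i)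

/-- A Boolean relation is mergeable if it is closed under the merge operation. -/
def Mergeable {r : ℕ} (R : Set (Fin r → Bool)) : Prop :=
  ∀ α ∈ R, ∀ β ∈ R, ∀ γ ∈ R, ∀ δ ∈ R,
    MergeApplies α β γ δ → (fun i => α i && (β i || γ i)) ∈ R

theorem stmt_5 {r : ℕ} (R : Set (Fin r → Bool))
    (hzero : (fun _ => false : Fin r → Bool) ∈ R) (hR : Mergeable R) :
    ∀ α ∈ R, ∀ β ∈ R, ∀ γ ∈ R, (fun i => α i && (β i || γ i)) ∈ R := by
  -- closure under pointwise conjunction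
  have hand : ∀ a ∈ R, ∀ b ∈ R, (fun i => a i && b i) ∈ R := by
    intro a ha b hb
    have := hR a ha _ hzero b hb _ hzero
      ⟨fun i => by simp, fun i => by simp, fun i => by simp, fun i => by simp⟩
    simpa using this
  intro α hα β hβ γ hγ
  have hm : (fun i => α i && β i) ∈ R := hand α hα β hβ
  have hd : (fun i => (α i && β i) && γ i) ∈ R := hand _ hm γ hγ
  have := hR α hα _ hm γ hγ _ hd
    ⟨fun i => by cases ha : α i <;> cases hb : β i <;> cases hc : γ i <;> simp [ha, hb, hc],
     fun i => by cases ha : α i <;> cases hb : β i <;> simp [ha, hb],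
     fun i => by cases ha : α i <;> cases hb : β i <;> cases hc : γ i <;> simp [ha, hb, hc],
     fun i => by cases ha : α i <;> cases hb : β i <;> cases hc : γ i <;> simp [ha, hb, hc]⟩
  convert this using 2 with i
  cases α i <;> cases β i <;> cases γ i <;> simp
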